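/- (Marginals, Case 4.) Suppose θ₁+θ₂ = θ₁′ and θ₁+θ₂ = θ₂′. Then for every y₁ ∈ (a,b), the marginal CDF F_{Y₁}(y₁) = ∫_a^{y₁} ∫_a^b f(u,v) dv du equals F₀(y₁)^{θ₁+θ₂}·[1 − θ₂ ln(F₀(y₁))], and for every y₂ ∈ (a,b), the marginal CDF F_{Y₂}(y₂) = ∫_a^b ∫_a^{y₂} f(u,v) dv du equals F₀(y₂)^{θ₁+θ₂}·[1 − θ₁ ln(F₀(y₂))]. -/

import Mathlib

open MeasureTheory Set

noncomputable def dprh (a b : ℝ) (F₀ f₀ : ℝ → ℝ) (θ₁ θ₂ θ₁' θ₂' : ℝ) (y₁ y₂ : ℝ) : ℝ :=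
  if a < y₁ ∧ y₁ < y₂ ∧ y₂ < b then
    θ₁' * θ₂ * f₀ y₁ * f₀ y₂ * F₀ y₁ ^ (θ₁' - 1) * F₀ y₂ ^ (θ₁ + θ₂ - θ₁' - 1)
  else if a < y₂ ∧ y₂ < y₁ ∧ y₁ < b then
    θ₁ * θ₂' * f₀ y₁ * f₀ y₂ * F₀ y₁ ^ (θ₁ + θ₂ - θ₂' - 1) * F₀ y₂ ^ (θ₂' - 1)
  else 0

open Filter in
private lemma key_ftc2 {F G h : ℝ → ℝ} {a b ga gb : ℝ} (hab : a < b)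
    (hderiv : ∀ x ∈ Set.Ioo a b, HasDerivAt F (G x) x)
    (hpos : ∀ x ∈ Set.Ioo a b, 0 ≤ G x)
    (ha : Filter.Tendsto F (nhdsWithin a (Set.Ioi a)) (nhds ga))
    (hb : Filter.Tendsto F (nhdsWithin b (Set.Iio b)) (nhds gb))
    (hh : ∀ x ∈ Set.Ioo a b, h x = G x) :
    IntervalIntegrable h volume a b ∧ (∫ y in a..b, h y) = gb - ga := by
  set F' : ℝ → ℝ := Function.update (Function.update F a ga) b gb with hF'
  have F'deriv : ∀ x ∈ Ioo a b, HasDerivAt F' (G x) x := by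
    refine fun x hx => (hderiv x hx).congr_of_eventuallyEq ?_
    filter_upwards [Ioo_mem_nhds hx.1 hx.2] with y hy
    rw [hF', Function.update_of_ne hy.2.ne, Function.update_of_ne hy.1.ne']
  have hcont : ContinuousOn F' (Icc a b) := by
    rw [hF', continuousOn_update_iff, continuousOn_update_iff, Icc_sdiff_right, Ico_sdiff_left]
    refine ⟨⟨fun z hz => (hderiv z hz).continuousAt.continuousWithinAt, ?_⟩, ?_⟩
    · exact fun _ => ha.mono_left (nhdsWithin_mono _ Ioo_subset_Ioi_self)
    · rintro -
      refine (hb.congr' ?_).mono_left (nhdsWithin_mono _ Ico_subset_Iio_self)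
      filter_upwards [Ioo_mem_nhdsLT_of_mem (right_mem_Ioc.2 hab)] with z hz using
        (Function.update_of_ne hz.1.ne' _ _).symm
  have hG : IntegrableOn G (Ioc a b) volume :=
    intervalIntegral.integrableOn_deriv_of_nonneg hcont F'deriv hpos
  have hGi : IntervalIntegrable G volume a b := by
    rw [intervalIntegrable_iff, uIoc_of_le hab.le]; exact hG
  have hbne : ∀ᵐ x : ℝ ∂volume, x ≠ b := by
    simp [ae_iff, setOf_eq_eq_singleton]
  have hae : ∀ᵐ x : ℝ ∂volume, x ∈ Set.uIoc a b → h x = G x := by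
    filter_upwards [hbne] with x hxb hxI
    rw [uIoc_of_le hab.le] at hxI
    exact hh x ⟨hxI.1, lt_of_le_of_ne hxI.2 hxb⟩
  have haer : G =ᵐ[volume.restrict (Set.uIoc a b)] h := by
    refine (ae_restrict_iff' measurableSet_uIoc).mpr ?_
    filter_upwards [hae] with x hx hxI
    exact (hx hxI).symm
  constructor
  · rw [intervalIntegrable_iff]
    exact ((intervalIntegrable_iff.mp hGi).congr haer)
  · rw [intervalIntegral.integral_congr_ae hae]
    exact intervalIntegral.integral_eq_sub_of_hasDerivAt_of_tendsto hab hderiv hGi ha hb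

open Filter in
theorem dprh_marginals_case4
    (a b : ℝ) (hab : a < b) (F₀ f₀ : ℝ → ℝ)
    (hderiv : ∀ y ∈ Ioo a b, HasDerivAt F₀ (f₀ y) y)
    (hf₀cont : ContinuousOn f₀ (Ioo a b))
    (hmono : StrictMonoOn F₀ (Ioo a b))
    (hf₀pos : ∀ y ∈ Ioo a b, 0 < f₀ y)
    (hF₀pos : ∀ y ∈ Ioo a b, 0 < F₀ y)
    (hF₀lt1 : ∀ y ∈ Ioo a b, F₀ y < 1)
    (hFa : Filter.Tendsto F₀ (nhdsWithin a (Ioi a)) (nhds 0))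
    (hFb : Filter.Tendsto F₀ (nhdsWithin b (Iio b)) (nhds 1))
    (θ₁ θ₂ θ₁' θ₂' : ℝ) (hθ₁ : 0 < θ₁) (hθ₂ : 0 < θ₂) (hθ₁' : 0 < θ₁') (hθ₂' : 0 < θ₂')
    (heq₁ : θ₁ + θ₂ = θ₁') (heq₂ : θ₁ + θ₂ = θ₂')
    :
    (∀ y₁ ∈ Ioo a b,
      (∫ u in a..y₁, ∫ v in a..b, dprh a b F₀ f₀ θ₁ θ₂ θ₁' θ₂' u v) =
        F₀ y₁ ^ (θ₁ + θ₂) * (1 - θ₂ * Real.log (F₀ y₁))) ∧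
    (∀ y₂ ∈ Ioo a b,
      (∫ u in a..b, ∫ v in a..y₂, dprh a b F₀ f₀ θ₁ θ₂ θ₁' θ₂' u v) =
        F₀ y₂ ^ (θ₁ + θ₂) * (1 - θ₁ * Real.log (F₀ y₂))) := by
  subst heq₁
  subst heq₂
  have htpos : (0:ℝ) < θ₁ + θ₂ := add_pos hθ₁ hθ₂
  have hne : ∀ x ∈ Ioo a b, F₀ x ≠ 0 := fun x hx => (hF₀pos x hx).ne'
  have hlog_np : ∀ x ∈ Ioo a b, Real.log (F₀ x) ≤ 0 :=
    fun x hx => Real.log_nonpos (hF₀pos x hx).le (hF₀lt1 x hx).le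
  -- basic limits
  have hFa' : Tendsto F₀ (nhdsWithin a (Ioi a)) (nhdsWithin (0:ℝ) (Ioi 0)) := by
    rw [tendsto_nhdsWithin_iff]
    refine ⟨hFa, ?_⟩
    filter_upwards [Ioo_mem_nhdsGT_of_mem (left_mem_Ico.mpr hab)] with x hx
    exact hF₀pos x hx
  have hrpow_a : Tendsto (fun u => F₀ u ^ (θ₁ + θ₂)) (nhdsWithin a (Ioi a)) (nhds 0) := by
    have hc : ContinuousAt (fun x : ℝ => x ^ (θ₁ + θ₂)) 0 :=
      Real.continuousAt_rpow_const 0 _ (Or.inr htpos.le)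
    have := hc.tendsto.comp hFa
    simpa [Function.comp_def, Real.zero_rpow htpos.ne'] using this
  have hlogrpow_a : Tendsto (fun u => Real.log (F₀ u) * F₀ u ^ (θ₁ + θ₂))
      (nhdsWithin a (Ioi a)) (nhds 0) := by
    have := (tendsto_log_mul_rpow_nhdsGT_zero htpos).comp hFa'
    simpa [Function.comp_def] using this
  have hlog_b : Tendsto (fun v => Real.log (F₀ v)) (nhdsWithin b (Iio b)) (nhds 0) := by
    have := (Real.continuousAt_log one_ne_zero).tendsto.comp hFb
    simpa [Function.comp_def] using this
  have hlog_cont : ∀ w ∈ Ioo a b, ContinuousAt (fun v => Real.log (F₀ v)) w := by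
    intro w hw
    exact (Real.continuousAt_log (hne w hw)).comp (hderiv w hw).continuousAt
  -- the two branches of the density
  have hd2 : ∀ u v, a < v → v < u → u < b →
      dprh a b F₀ f₀ θ₁ θ₂ (θ₁+θ₂) (θ₁+θ₂) u v
        = θ₁ * (θ₁+θ₂) * f₀ u * f₀ v * F₀ u ^ (-1:ℝ) * F₀ v ^ ((θ₁+θ₂)-1) := by
    intro u v h1 h2 h3
    have hc1 : ¬(a < u ∧ u < v ∧ v < b) := fun hc => absurd hc.2.1 (not_lt.mpr h2.le)
    rw [dprh, if_neg hc1, if_pos ⟨h1, h2, h3⟩,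
      show θ₁ + θ₂ - (θ₁+θ₂) - 1 = (-1:ℝ) from by ring]
  have hd1 : ∀ u v, a < u → u < v → v < b →
      dprh a b F₀ f₀ θ₁ θ₂ (θ₁+θ₂) (θ₁+θ₂) u v
        = (θ₁+θ₂) * θ₂ * f₀ u * f₀ v * F₀ u ^ ((θ₁+θ₂)-1) * F₀ v ^ (-1:ℝ) := by
    intro u v h1 h2 h3
    rw [dprh, if_pos ⟨h1, h2, h3⟩,
      show θ₁ + θ₂ - (θ₁+θ₂) - 1 = (-1:ℝ) from by ring]
  -- inner integral, left part : ∫ v in a..w  with w ≤ u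
  have innerL : ∀ u ∈ Ioo a b, ∀ w, a < w → w ≤ u →
      IntervalIntegrable (fun v => dprh a b F₀ f₀ θ₁ θ₂ (θ₁+θ₂) (θ₁+θ₂) u v) volume a w ∧
      (∫ v in a..w, dprh a b F₀ f₀ θ₁ θ₂ (θ₁+θ₂) (θ₁+θ₂) u v)
        = θ₁ * f₀ u * F₀ u ^ (-1:ℝ) * F₀ w ^ (θ₁+θ₂) := by
    intro u hu w hw hwu
    have hwb : w ∈ Ioo a b := ⟨hw, lt_of_le_of_lt hwu hu.2⟩
    set C : ℝ := θ₁ * f₀ u * F₀ u ^ (-1:ℝ) with hC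
    have hCpos : 0 ≤ C := by
      exact mul_nonneg (mul_nonneg hθ₁.le (hf₀pos u hu).le)
        (Real.rpow_pos_of_pos (hF₀pos u hu) _).le
    have key := key_ftc2 (F := fun v => C * F₀ v ^ (θ₁+θ₂))
        (G := fun v => C * (f₀ v * (θ₁+θ₂) * F₀ v ^ ((θ₁+θ₂)-1)))
        (h := fun v => dprh a b F₀ f₀ θ₁ θ₂ (θ₁+θ₂) (θ₁+θ₂) u v)
        (ga := 0) (gb := C * F₀ w ^ (θ₁+θ₂)) hw
        (fun v hv => by
          have hv' : v ∈ Ioo a b := ⟨hv.1, hv.2.trans_le (hwu.trans hu.2.le)⟩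
          exact ((hderiv v hv').rpow_const (Or.inl (hne v hv'))).const_mul C)
        (fun v hv => by
          have hv' : v ∈ Ioo a b := ⟨hv.1, hv.2.trans_le (hwu.trans hu.2.le)⟩
          exact mul_nonneg hCpos (mul_nonneg (mul_nonneg (hf₀pos v hv').le htpos.le)
            (Real.rpow_pos_of_pos (hF₀pos v hv') _).le))
        (by simpa using hrpow_a.const_mul C)
        (by
          have : ContinuousAt (fun v => C * F₀ v ^ (θ₁+θ₂)) w :=
            (((hderiv w hwb).continuousAt).rpow_const (Or.inl (hne w hwb))).const_mul C
          exact this.continuousWithinAt)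
        (fun v hv => by
          rw [hd2 u v hv.1 (hv.2.trans_le hwu) hu.2]; ring)
    refine ⟨key.1, ?_⟩
    rw [key.2]; ring
  -- inner integral, right part : ∫ v in u..w  with u < w ≤ b
  have innerR : ∀ u ∈ Ioo a b, ∀ w lw, u < w → w ≤ b →
      Tendsto (fun v => Real.log (F₀ v)) (nhdsWithin w (Iio w)) (nhds lw) →
      IntervalIntegrable (fun v => dprh a b F₀ f₀ θ₁ θ₂ (θ₁+θ₂) (θ₁+θ₂) u v) volume u w ∧
      (∫ v in u..w, dprh a b F₀ f₀ θ₁ θ₂ (θ₁+θ₂) (θ₁+θ₂) u v)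
        = (θ₁+θ₂) * θ₂ * f₀ u * F₀ u ^ ((θ₁+θ₂)-1) * (lw - Real.log (F₀ u)) := by
    intro u hu w lw huw hwb hlw
    set C : ℝ := (θ₁+θ₂) * θ₂ * f₀ u * F₀ u ^ ((θ₁+θ₂)-1) with hC
    have hCpos : 0 ≤ C :=
      mul_nonneg (mul_nonneg (mul_nonneg htpos.le hθ₂.le) (hf₀pos u hu).le)
        (Real.rpow_pos_of_pos (hF₀pos u hu) _).le
    have key := key_ftc2 (F := fun v => C * Real.log (F₀ v))
        (G := fun v => C * (f₀ v / F₀ v))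
        (h := fun v => dprh a b F₀ f₀ θ₁ θ₂ (θ₁+θ₂) (θ₁+θ₂) u v)
        (ga := C * Real.log (F₀ u)) (gb := C * lw) huw
        (fun v hv => by
          have hv' : v ∈ Ioo a b := ⟨hu.1.trans hv.1, hv.2.trans_le hwb⟩
          exact ((hderiv v hv').log (hne v hv')).const_mul C)
        (fun v hv => by
          have hv' : v ∈ Ioo a b := ⟨hu.1.trans hv.1, hv.2.trans_le hwb⟩
          exact mul_nonneg hCpos (div_nonneg (hf₀pos v hv').le (hF₀pos v hv').le))
        (by
          have hcc : ContinuousAt (fun v => C * Real.log (F₀ v)) u :=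
            continuousAt_const.mul (hlog_cont u hu)
          exact hcc.continuousWithinAt)
        (hlw.const_mul C)
        (fun v hv => by
          have hv' : v ∈ Ioo a b := ⟨hu.1.trans hv.1, hv.2.trans_le hwb⟩
          rw [hd1 u v hu.1 hv.1 (hv.2.trans_le hwb), Real.rpow_neg_one, div_eq_mul_inv]
          ring)
    refine ⟨key.1, ?_⟩
    rw [key.2]; ring
  -- full inner integral for the first marginal
  have inner1 : ∀ u ∈ Ioo a b,
      (∫ v in a..b, dprh a b F₀ f₀ θ₁ θ₂ (θ₁+θ₂) (θ₁+θ₂) u v)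
        = f₀ u * F₀ u ^ ((θ₁+θ₂)-1) * (θ₁ + (θ₁+θ₂) * θ₂ * (0 - Real.log (F₀ u))) := by
    intro u hu
    obtain ⟨i1, e1⟩ := innerL u hu u hu.1 le_rfl
    obtain ⟨i2, e2⟩ := innerR u hu b 0 hu.2 le_rfl hlog_b
    have hm : F₀ u ^ (-1:ℝ) * F₀ u ^ (θ₁+θ₂) = F₀ u ^ ((θ₁+θ₂)-1) := by
      rw [← Real.rpow_add (hF₀pos u hu)]; ring_nf
    rw [← intervalIntegral.integral_add_adjacent_intervals i1 i2, e1, e2, ← hm]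
    ring
  -- inner integral for the second marginal, case u < y₂
  have inner2a : ∀ y₂ ∈ Ioo a b, ∀ u ∈ Ioo a y₂,
      (∫ v in a..y₂, dprh a b F₀ f₀ θ₁ θ₂ (θ₁+θ₂) (θ₁+θ₂) u v)
        = f₀ u * F₀ u ^ ((θ₁+θ₂)-1) *
            (θ₁ + (θ₁+θ₂) * θ₂ * (Real.log (F₀ y₂) - Real.log (F₀ u))) := by
    intro y₂ hy₂ u hu'
    have hu : u ∈ Ioo a b := ⟨hu'.1, hu'.2.trans hy₂.2⟩
    obtain ⟨i1, e1⟩ := innerL u hu u hu.1 le_rfl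
    obtain ⟨i2, e2⟩ := innerR u hu y₂ (Real.log (F₀ y₂)) hu'.2 hy₂.2.le
      ((hlog_cont y₂ hy₂).continuousWithinAt)
    have hm : F₀ u ^ (-1:ℝ) * F₀ u ^ (θ₁+θ₂) = F₀ u ^ ((θ₁+θ₂)-1) := by
      rw [← Real.rpow_add (hF₀pos u hu)]; ring_nf
    rw [← intervalIntegral.integral_add_adjacent_intervals i1 i2, e1, e2, ← hm]
    ring
  -- inner integral for the second marginal, case y₂ < u
  have inner2b : ∀ y₂ ∈ Ioo a b, ∀ u ∈ Ioo y₂ b,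
      (∫ v in a..y₂, dprh a b F₀ f₀ θ₁ θ₂ (θ₁+θ₂) (θ₁+θ₂) u v)
        = θ₁ * f₀ u * F₀ u ^ (-1:ℝ) * F₀ y₂ ^ (θ₁+θ₂) := by
    intro y₂ hy₂ u hu
    exact (innerL u ⟨hy₂.1.trans hu.1, hu.2⟩ y₂ hy₂.1 hu.1.le).2
  -- the outer antiderivative (with a parameter L)
  have gderiv : ∀ (L : ℝ), ∀ u ∈ Ioo a b, HasDerivAt
      (fun u => F₀ u ^ (θ₁+θ₂) * (1 + θ₂ * L - θ₂ * Real.log (F₀ u)))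
      (f₀ u * F₀ u ^ ((θ₁+θ₂)-1) * (θ₁ + (θ₁+θ₂) * θ₂ * (L - Real.log (F₀ u)))) u := by
    intro L u hu
    have h1 : HasDerivAt (fun u => F₀ u ^ (θ₁+θ₂))
        (f₀ u * (θ₁+θ₂) * F₀ u ^ ((θ₁+θ₂)-1)) u :=
      (hderiv u hu).rpow_const (Or.inl (hne u hu))
    have h2 : HasDerivAt (fun u => 1 + θ₂ * L - θ₂ * Real.log (F₀ u))
        (-(θ₂ * (f₀ u / F₀ u))) u := by
      have := (((hderiv u hu).log (hne u hu)).const_mul θ₂).const_sub (1 + θ₂ * L)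
      simpa using this
    have h3 := h1.mul h2
    refine h3.congr_deriv ?_
    have hsplit : F₀ u ^ ((θ₁+θ₂) - 1) * F₀ u = F₀ u ^ (θ₁+θ₂) := by
      rw [← Real.rpow_add_one (hne u hu)]; ring_nf
    rw [← hsplit]
    field_simp [hne u hu]
    ring
  have glim_a : ∀ (L : ℝ), Tendsto
      (fun u => F₀ u ^ (θ₁+θ₂) * (1 + θ₂ * L - θ₂ * Real.log (F₀ u)))
      (nhdsWithin a (Ioi a)) (nhds 0) := by
    intro L
    have h1 := hrpow_a.const_mul (1 + θ₂ * L)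
    have h2 := hlogrpow_a.const_mul θ₂
    have h3 := h1.sub h2
    have h4 := Filter.Tendsto.congr (f₂ := fun u =>
        F₀ u ^ (θ₁+θ₂) * (1 + θ₂ * L - θ₂ * Real.log (F₀ u)))
      (fun u => by ring) h3
    simpa using h4
  have Gpos : ∀ (L : ℝ), ∀ u ∈ Ioo a b, Real.log (F₀ u) ≤ L →
      0 ≤ f₀ u * F₀ u ^ ((θ₁+θ₂)-1) * (θ₁ + (θ₁+θ₂) * θ₂ * (L - Real.log (F₀ u))) := by
    intro L u hu hL
    refine mul_nonneg (mul_nonneg (hf₀pos u hu).le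
      (Real.rpow_pos_of_pos (hF₀pos u hu) _).le) ?_
    have : 0 ≤ (θ₁+θ₂) * θ₂ * (L - Real.log (F₀ u)) :=
      mul_nonneg (mul_nonneg htpos.le hθ₂.le) (by linarith)
    linarith
  constructor
  · -- first marginal
    intro y₁ hy₁
    have key := key_ftc2
        (F := fun u => F₀ u ^ (θ₁+θ₂) * (1 + θ₂ * 0 - θ₂ * Real.log (F₀ u)))
        (G := fun u => f₀ u * F₀ u ^ ((θ₁+θ₂)-1) *
          (θ₁ + (θ₁+θ₂) * θ₂ * (0 - Real.log (F₀ u))))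
        (h := fun u => ∫ v in a..b, dprh a b F₀ f₀ θ₁ θ₂ (θ₁+θ₂) (θ₁+θ₂) u v)
        (ga := 0) (gb := F₀ y₁ ^ (θ₁+θ₂) * (1 + θ₂ * 0 - θ₂ * Real.log (F₀ y₁))) hy₁.1
        (fun u hu => gderiv 0 u ⟨hu.1, hu.2.trans hy₁.2⟩)
        (fun u hu => Gpos 0 u ⟨hu.1, hu.2.trans hy₁.2⟩
          (hlog_np u ⟨hu.1, hu.2.trans hy₁.2⟩))
        (glim_a 0)
        ((gderiv 0 y₁ hy₁).continuousAt.continuousWithinAt)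
        (fun u hu => by exact inner1 u ⟨hu.1, hu.2.trans hy₁.2⟩)
    rw [key.2]; ring
  · -- second marginal
    intro y₂ hy₂
    set L : ℝ := Real.log (F₀ y₂) with hL
    have keyP1 := key_ftc2
        (F := fun u => F₀ u ^ (θ₁+θ₂) * (1 + θ₂ * L - θ₂ * Real.log (F₀ u)))
        (G := fun u => f₀ u * F₀ u ^ ((θ₁+θ₂)-1) *
          (θ₁ + (θ₁+θ₂) * θ₂ * (L - Real.log (F₀ u))))
        (h := fun u => ∫ v in a..y₂, dprh a b F₀ f₀ θ₁ θ₂ (θ₁+θ₂) (θ₁+θ₂) u v)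
        (ga := 0) (gb := F₀ y₂ ^ (θ₁+θ₂) * (1 + θ₂ * L - θ₂ * L)) hy₂.1
        (fun u hu => gderiv L u ⟨hu.1, hu.2.trans hy₂.2⟩)
        (fun u hu => by
          have hu' : u ∈ Ioo a b := ⟨hu.1, hu.2.trans hy₂.2⟩
          refine Gpos L u hu' ?_
          have := hmono hu' hy₂ hu.2
          exact (Real.log_le_log_iff (hF₀pos u hu') (hF₀pos y₂ hy₂)).mpr this.le)
        (glim_a L)
        ((gderiv L y₂ hy₂).continuousAt.continuousWithinAt)
        (fun u hu => by exact inner2a y₂ hy₂ u hu)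
    have keyP2 := key_ftc2
        (F := fun u => θ₁ * F₀ y₂ ^ (θ₁+θ₂) * Real.log (F₀ u))
        (G := fun u => θ₁ * F₀ y₂ ^ (θ₁+θ₂) * (f₀ u / F₀ u))
        (h := fun u => ∫ v in a..y₂, dprh a b F₀ f₀ θ₁ θ₂ (θ₁+θ₂) (θ₁+θ₂) u v)
        (ga := θ₁ * F₀ y₂ ^ (θ₁+θ₂) * L) (gb := θ₁ * F₀ y₂ ^ (θ₁+θ₂) * 0) hy₂.2
        (fun u hu => by
          have hu' : u ∈ Ioo a b := ⟨hy₂.1.trans hu.1, hu.2⟩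
          exact ((hderiv u hu').log (hne u hu')).const_mul _)
        (fun u hu => by
          have hu' : u ∈ Ioo a b := ⟨hy₂.1.trans hu.1, hu.2⟩
          exact mul_nonneg (mul_nonneg hθ₁.le
              (Real.rpow_pos_of_pos (hF₀pos y₂ hy₂) _).le)
            (div_nonneg (hf₀pos u hu').le (hF₀pos u hu').le))
        (by
          have hcc : ContinuousAt (fun u => θ₁ * F₀ y₂ ^ (θ₁+θ₂) * Real.log (F₀ u)) y₂ :=
            continuousAt_const.mul (hlog_cont y₂ hy₂)
          exact hcc.continuousWithinAt)
        (hlog_b.const_mul _)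
        (fun u hu => by
          have hu' : u ∈ Ioo a b := ⟨hy₂.1.trans hu.1, hu.2⟩
          rw [inner2b y₂ hy₂ u hu, Real.rpow_neg_one, div_eq_mul_inv]
          ring)
    rw [← intervalIntegral.integral_add_adjacent_intervals keyP1.1 keyP2.1, keyP1.2, keyP2.2]
    ring
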